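/- log(4/π) = γ − 2∑_{k=2}^∞ (−1)^k ζ(k)/(2^k k), where γ is Euler's constant. -/

import Mathlib

open Filter Topology

set_option maxHeartbeats 1000000

noncomputable def st8a (k n : ℕ) : ℝ := (-(1 / (2 * ((n : ℝ) + 1)))) ^ (k + 2) / (k + 2)

lemma st8a_abs (k n : ℕ) : |st8a k n| = (1 / (2 * ((n : ℝ) + 1))) ^ (k + 2) / (k + 2) := by
  have hy : (0:ℝ) < 1 / (2 * ((n:ℝ)+1)) := by positivity
  have hk : (0:ℝ) < (k:ℝ) + 2 := by positivity
  rw [st8a, abs_div, abs_pow, abs_neg, abs_of_pos hy, abs_of_pos hk]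

lemma st8a_abs_summable : Summable (fun p : ℕ × ℕ => |st8a p.1 p.2|) := by
  have hf : Summable (fun k : ℕ => ((1:ℝ)/2) ^ k) :=
    summable_geometric_of_lt_one (by norm_num) (by norm_num)
  have hg : Summable (fun n : ℕ => 1 / ((n:ℝ)+1)^2) := by
    have := (summable_nat_add_iff (f := fun n : ℕ => 1 / (n:ℝ)^2) 1).2
      ((Real.summable_one_div_nat_pow).2 one_lt_two)
    exact this.congr (by intro n; push_cast; ring)
  have hb : Summable (fun p : ℕ × ℕ => ((1:ℝ)/2) ^ p.1 * (1 / ((p.2:ℝ)+1)^2)) :=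
    hf.mul_of_nonneg hg (fun k => by positivity) (fun n => by positivity)
  apply Summable.of_nonneg_of_le (fun p => abs_nonneg _) _ hb
  intro ⟨k, n⟩
  rw [st8a_abs]
  have hn : (0:ℝ) < (n:ℝ)+1 := by positivity
  have h1 : (1:ℝ) / (2 * ((n:ℝ)+1)) = (1/2) * (1/((n:ℝ)+1)) := by
    rw [div_mul_div_comm, one_mul]
  have h2 : ((1:ℝ)/2) ^ (k+2) ≤ (1/2)^k := by
    apply pow_le_pow_of_le_one (by norm_num) (by norm_num) (by omega)
  have h3 : ((1:ℝ)/((n:ℝ)+1)) ^ (k+2) ≤ (1/((n:ℝ)+1))^2 := by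
    apply pow_le_pow_of_le_one (by positivity) _ (by omega)
    rw [div_le_one hn]; linarith
  have h4 : (0:ℝ) < (k:ℝ) + 2 := by positivity
  calc (1 / (2 * ((n:ℝ)+1)))^(k+2)/((k:ℝ)+2) = ((1:ℝ)/2)^(k+2) * (1/((n:ℝ)+1))^(k+2) / ((k:ℝ)+2) := by
        rw [h1, mul_pow]
    _ ≤ ((1:ℝ)/2)^(k+2) * (1/((n:ℝ)+1))^(k+2) := by
        apply div_le_self (by positivity); linarith
    _ ≤ (1/2)^k * (1/((n:ℝ)+1))^2 :=
        mul_le_mul h2 h3 (by positivity) (by positivity)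
    _ = (1/2)^k * (1/((n:ℝ)+1)^2) := by rw [one_div ((n:ℝ)+1), one_div (((n:ℝ)+1)^2), inv_pow]

lemma st8a_summable : Summable (Function.uncurry st8a) :=
  Summable.of_abs st8a_abs_summable

lemma st8_log_series (x : ℝ) (h0 : 0 < x) (h1 : x < 1) :
    HasSum (fun k : ℕ => (-x) ^ (k + 2) / ((k : ℝ) + 2)) (x - Real.log (1 + x)) := by
  have habs : |(-x)| < 1 := by rwa [abs_neg, abs_of_pos h0]
  have h2 := Real.hasSum_pow_div_log_of_abs_lt_one habs
  rw [sub_neg_eq_add] at h2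
  have hval : -Real.log (1+x) = (x - Real.log (1+x)) + ∑ i ∈ Finset.range 1, (-x)^(i+1)/((i:ℝ)+1) := by
    simp only [Finset.sum_range_one, Nat.cast_zero, zero_add, pow_one, div_one]
    ring
  rw [hval] at h2
  have h3 := (hasSum_nat_add_iff (f := fun m : ℕ => (-x) ^ (m + 1) / ((m:ℝ) + 1)) 1).2 h2
  have heq : (fun m : ℕ => (-x) ^ (m + 1 + 1) / ((↑(m+1):ℝ) + 1))
      = (fun k : ℕ => (-x) ^ (k + 2) / ((k:ℝ) + 2)) := by
    funext m; push_cast; ring_nf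
  rwa [heq] at h3

lemma st8a_hasSum (n : ℕ) :
    HasSum (fun k => st8a k n)
      (1/(2*((n:ℝ)+1)) - Real.log (1 + 1/(2*((n:ℝ)+1)))) := by
  have hlt : (1:ℝ)/(2*((n:ℝ)+1)) < 1 := by
    rw [div_lt_one (by positivity)]
    have : (0:ℝ) ≤ (n:ℝ) := Nat.cast_nonneg n
    linarith
  simpa [st8a] using st8_log_series (1/(2*((n:ℝ)+1))) (by positivity) hlt

noncomputable def st8g (n : ℕ) : ℝ :=
  1/(2*((n:ℝ)+1)) - Real.log (1 + 1/(2*((n:ℝ)+1)))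

noncomputable def st8F (k : ℕ) : ℝ :=
  (-1 : ℝ) ^ (k + 2) * (∑' n : ℕ, (1 : ℝ) / (n + 1) ^ (k + 2)) / (2 ^ (k + 2) * (k + 2))

lemma st8_houter : Summable (fun n : ℕ => ∑' k : ℕ, |st8a k n|) := by
  have hswap : Summable (fun p : ℕ × ℕ => |st8a p.2 p.1|) := st8a_abs_summable.prod_symm
  exact ((summable_prod_of_nonneg (fun p => abs_nonneg _)).1 hswap).2

lemma st8g_summable : Summable st8g := by
  apply Summable.of_abs
  apply Summable.of_nonneg_of_le (fun n => abs_nonneg _) _ st8_houter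
  intro n
  have h1 : st8g n = ∑' k, st8a k n := (st8a_hasSum n).tsum_eq.symm
  rw [h1]
  simpa using norm_tsum_le_tsum_norm (f := fun k => st8a k n)
    (by simpa using st8a_abs_summable.prod_symm.prod_factor n)

lemma st8F_eq (k : ℕ) : st8F k = ∑' n : ℕ, st8a k n := by
  have hpt : ∀ n : ℕ, st8a k n
      = ((-1:ℝ)^(k+2)/(2^(k+2)*((k:ℝ)+2))) * ((1:ℝ)/((n:ℝ)+1)^(k+2)) := by
    intro n
    rw [st8a, neg_pow, div_pow, mul_pow, one_pow]
    have hn : ((n:ℝ)+1) ≠ 0 := by positivity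
    have hk : ((k:ℝ)+2) ≠ 0 := by positivity
    field_simp
  rw [tsum_congr hpt, tsum_mul_left, st8F]
  ring

lemma st8F_summable : Summable st8F := by
  apply Summable.of_abs
  apply Summable.of_nonneg_of_le (fun k => abs_nonneg _) _
    ((summable_prod_of_nonneg (fun p => abs_nonneg _)).1 st8a_abs_summable).2
  intro k
  rw [st8F_eq]
  simpa using norm_tsum_le_tsum_norm (f := fun n => st8a k n)
    (by simpa using st8a_abs_summable.prod_factor k)

lemma st8F_tsum : ∑' k, st8F k = ∑' n, st8g n := by
  rw [tsum_congr st8F_eq]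
  rw [← Summable.tsum_comm (f := st8a) st8a_summable]
  exact tsum_congr fun n => (st8a_hasSum n).tsum_eq

noncomputable def st8W (k : ℕ) : ℝ :=
  ∏ i ∈ Finset.range k, ((2 : ℝ) * i + 2) / (2 * i + 1) * ((2 * i + 2) / (2 * i + 3))

noncomputable def st8P (k : ℕ) : ℝ :=
  ∏ i ∈ Finset.range k, ((2 : ℝ) * i + 3) / (2 * i + 2)

lemma st8W_pos (k : ℕ) : 0 < st8W k :=
  Finset.prod_pos fun i _ => by positivity

lemma st8P_pos (k : ℕ) : 0 < st8P k :=
  Finset.prod_pos fun i _ => by positivity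

lemma st8_WP (N : ℕ) : st8W N * (st8P N)^2 = 2*(N:ℝ)+1 := by
  induction N with
  | zero => simp [st8W, st8P]
  | succ n ih =>
    have h1 : (2*(n:ℝ)+1) ≠ 0 := by positivity
    have h2 : (2*(n:ℝ)+2) ≠ 0 := by positivity
    have h3 : (2*(n:ℝ)+3) ≠ 0 := by positivity
    rw [st8W, st8P, Finset.prod_range_succ, Finset.prod_range_succ, ← st8W, ← st8P]
    push_cast
    calc st8W n * ((2*(n:ℝ)+2)/(2*n+1) * ((2*n+2)/(2*n+3)))
          * (st8P n * ((2*(n:ℝ)+3)/(2*n+2)))^2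
        = (st8W n * (st8P n)^2)
          * ((2*(n:ℝ)+2)/(2*n+1) * ((2*n+2)/(2*n+3)) * ((2*(n:ℝ)+3)/(2*n+2))^2) := by
          ring
      _ = (2*(n:ℝ)+1)
          * ((2*(n:ℝ)+2)/(2*n+1) * ((2*n+2)/(2*n+3)) * ((2*(n:ℝ)+3)/(2*n+2))^2) := by
          rw [ih]
      _ = 2*((n:ℝ)+1)+1 := by field_simp; ring

lemma st8_logsum (N : ℕ) :
    ∑ i ∈ Finset.range N, Real.log (1 + 1/(2*((i:ℝ)+1))) = Real.log (st8P N) := by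
  rw [st8P, Real.log_prod (fun i _ => ne_of_gt (by positivity))]
  refine Finset.sum_congr rfl fun i _ => ?_
  congr 1
  have : (2*(i:ℝ)+2) ≠ 0 := by positivity
  field_simp
  ring

lemma st8_leq (N : ℕ) :
    2 * Real.log (st8P N) = Real.log (2*(N:ℝ)+1) - Real.log (st8W N) := by
  rw [← st8_WP N, Real.log_mul (ne_of_gt (st8W_pos N)) (pow_ne_zero 2 (ne_of_gt (st8P_pos N))), Real.log_pow]
  push_cast
  ring

lemma st8_L_tendsto :
    Tendsto (fun N : ℕ => 2 * ∑ i ∈ Finset.range N, Real.log (1 + 1/(2*((i:ℝ)+1)))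
      - Real.log N) atTop (𝓝 (Real.log (4/Real.pi))) := by
  have hW : Tendsto (fun N : ℕ => Real.log (st8W N)) atTop (𝓝 (Real.log (Real.pi/2))) := by
    have hc : ContinuousAt Real.log (Real.pi/2) :=
      Real.continuousAt_log (by positivity)
    exact hc.tendsto.comp Real.tendsto_prod_pi_div_two
  have h2 : Tendsto (fun N : ℕ => Real.log (2*(N:ℝ)+1) - Real.log N) atTop
      (𝓝 (Real.log 2)) := by
    have hq : Tendsto (fun N : ℕ => (2:ℝ) + 1/N) atTop (𝓝 2) := by
      have := tendsto_const_nhds (x := (2:ℝ)) (f := atTop (α := ℕ))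
      simpa using this.add tendsto_one_div_atTop_nhds_zero_nat
    have hl : Tendsto (fun N : ℕ => Real.log ((2:ℝ) + 1/N)) atTop (𝓝 (Real.log 2)) :=
      ((Real.continuousAt_log (by norm_num)).tendsto.comp hq)
    apply hl.congr'
    filter_upwards [eventually_ge_atTop 1] with N hN
    have hN0 : ((N:ℝ)) ≠ 0 := by
      have : (1:ℝ) ≤ (N:ℝ) := by exact_mod_cast hN
      linarith
    have h21 : (2*(N:ℝ)+1) ≠ 0 := by positivity
    rw [show (2:ℝ) + 1/(N:ℝ) = (2*(N:ℝ)+1)/N by field_simp, Real.log_div h21 hN0]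
  have hcomb := h2.sub hW
  have hval : Real.log 2 - Real.log (Real.pi/2) = Real.log (4/Real.pi) := by
    rw [Real.log_div (by norm_num) (ne_of_gt Real.pi_pos),
      Real.log_div (ne_of_gt Real.pi_pos) (by norm_num),
      show (4:ℝ) = 2^2 by norm_num, Real.log_pow]
    push_cast
    ring
  rw [hval] at hcomb
  apply hcomb.congr
  intro N
  rw [st8_logsum, st8_leq]
  ring

/-- `log(4/π) = γ − 2∑_{k=2}^∞ (−1)^k ζ(k)/(2^k k)`. -/
theorem stmt_8 (γ : ℝ)
    (hγ : Tendsto (fun n : ℕ => (∑ j ∈ Finset.range n, (1 : ℝ) / (j + 1)) - Real.log n)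
      atTop (𝓝 γ)) :
    Summable (fun k : ℕ =>
        (-1 : ℝ) ^ (k + 2) * (∑' n : ℕ, (1 : ℝ) / (n + 1) ^ (k + 2)) / (2 ^ (k + 2) * (k + 2)))
    ∧ Real.log (4 / Real.pi)
      = γ - 2 * ∑' k : ℕ,
          (-1 : ℝ) ^ (k + 2) * (∑' n : ℕ, (1 : ℝ) / (n + 1) ^ (k + 2))
            / (2 ^ (k + 2) * (k + 2)) := by
  have hfun : (fun k : ℕ =>
      (-1 : ℝ) ^ (k + 2) * (∑' n : ℕ, (1 : ℝ) / (n + 1) ^ (k + 2)) / (2 ^ (k + 2) * (k + 2)))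
      = st8F := rfl
  rw [hfun]
  refine ⟨st8F_summable, ?_⟩
  set T : ℝ := ∑' n, st8g n with hT
  have hpart : Tendsto (fun N => ∑ n ∈ Finset.range N, st8g n) atTop (𝓝 T) :=
    st8g_summable.hasSum.tendsto_sum_nat
  have hmain : Tendsto (fun N : ℕ => (∑ j ∈ Finset.range N, (1:ℝ)/(j+1)) - Real.log N)
      atTop (𝓝 (2*T + Real.log (4/Real.pi))) := by
    have h2 := (hpart.const_mul 2).add st8_L_tendsto
    apply h2.congr
    intro N
    have e1 : ∑ j ∈ Finset.range N, (1:ℝ)/(j+1)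
        = 2 * ∑ n ∈ Finset.range N, 1/(2*((n:ℝ)+1)) := by
      rw [Finset.mul_sum]
      refine Finset.sum_congr rfl fun i _ => ?_
      have : ((i:ℝ)+1) ≠ 0 := by positivity
      field_simp
    have e2 : ∑ n ∈ Finset.range N, st8g n
        = (∑ n ∈ Finset.range N, 1/(2*((n:ℝ)+1)))
          - ∑ n ∈ Finset.range N, Real.log (1 + 1/(2*((n:ℝ)+1))) := by
      rw [← Finset.sum_sub_distrib]
      rfl
    rw [e1, e2]
    ring
  have hγeq : γ = 2*T + Real.log (4/Real.pi) := tendsto_nhds_unique hγ hmain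
  rw [st8F_tsum, ← hT, hγeq]
  ring
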